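/- The set Δ⁰₂[FIN] of codes e such that {e}^A has finite domain for every Δ⁰₂ set A is a Π⁰₄ set. -/

import Mathlib

/-- The list of the first `n` values of `g`. -/
def funToList (g : ℕ → ℕ) (n : ℕ) : List ℕ := (List.range n).map g

open Classical in
/-- Characteristic (partial) function of a set of naturals, used as an oracle. -/
noncomputable def chi (A : Set ℕ) : ℕ →. ℕ := fun n => Part.some (if n ∈ A then 1 else 0)

/-- A total function regarded as a partial oracle. -/
def totalize (g : ℕ → ℕ) : ℕ →. ℕ := fun n => Part.some (g n)

/-- Codes for oracle Turing machines (partial recursive functionals). -/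
inductive OCode : Type
  | zero | succ | left | right | oracle
  | pair (a b : OCode) | comp (a b : OCode) | prec (a b : OCode) | rfind' (a : OCode)

/-- Evaluation of an oracle code with oracle `g`. -/
def OCode.eval (g : ℕ →. ℕ) : OCode → ℕ →. ℕ
  | .zero => pure 0
  | .succ => fun n => Part.some (n + 1)
  | .left => fun n => Part.some (Nat.unpair n).1
  | .right => fun n => Part.some (Nat.unpair n).2
  | .oracle => g
  | .pair a b => fun n => Nat.pair <$> OCode.eval g a n <*> OCode.eval g b n
  | .comp a b => fun n => OCode.eval g b n >>= OCode.eval g a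
  | .prec a b =>
      Nat.unpaired fun m n =>
        n.rec (OCode.eval g a m) fun y IH => do
          let i ← IH
          OCode.eval g b (Nat.pair m (Nat.pair y i))
  | .rfind' a =>
      Nat.unpaired fun m n =>
        (Nat.rfind fun k => (fun x => x = 0) <$> OCode.eval g a (Nat.pair m (k + n))).map (· + n)

/-- A surjective numbering of oracle codes. -/
def OCode.ofNat : ℕ → OCode
  | 0 => .zero
  | 1 => .succ
  | 2 => .left
  | 3 => .right
  | 4 => .oracle
  | n + 5 =>
    let m := n.div2.div2
    have hm : m < n + 5 := by
      simp only [m, Nat.div2_val]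
      exact lt_of_le_of_lt (le_trans (Nat.div_le_self _ _) (Nat.div_le_self _ _)) (by omega)
    have _m1 : m.unpair.1 < n + 5 := lt_of_le_of_lt m.unpair_left_le hm
    have _m2 : m.unpair.2 < n + 5 := lt_of_le_of_lt m.unpair_right_le hm
    match n.bodd, n.div2.bodd with
    | false, false => .pair (OCode.ofNat m.unpair.1) (OCode.ofNat m.unpair.2)
    | false, true  => .comp (OCode.ofNat m.unpair.1) (OCode.ofNat m.unpair.2)
    | true , false => .prec (OCode.ofNat m.unpair.1) (OCode.ofNat m.unpair.2)
    | true , true  => .rfind' (OCode.ofNat m)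
  decreasing_by
    all_goals first
      | exact _m1 | exact _m2 | exact hm
      | exact Nat.le_of_lt_succ _m1 | exact Nat.le_of_lt_succ _m2 | exact Nat.le_of_lt_succ hm
      | (simp_wf; first | exact Nat.le_of_lt_succ _m1 | exact Nat.le_of_lt_succ _m2 | exact Nat.le_of_lt_succ hm | omega)

/-- `{e}^g`, the `e`-th oracle machine with oracle `g`. -/
def OEval (e : ℕ) (g : ℕ →. ℕ) : ℕ →. ℕ := (OCode.ofNat e).eval g

/-- `{e}`, the `e`-th (ordinary) partial recursive function. -/
def phi (e : ℕ) : ℕ →. ℕ := (Denumerable.ofNat Nat.Partrec.Code e).eval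

/-- `W_e`, the `e`-th computably enumerable set. -/
def We (e : ℕ) : Set ℕ := {n | (phi e n).Dom}

/-- `A` is computably enumerable. -/
def CE (A : Set ℕ) : Prop := ∃ e : ℕ, A = We e

/-- `A` is Δ⁰₂ (limit computable). -/
def Delta02 (A : Set ℕ) : Prop :=
  ∃ F : ℕ → ℕ → Bool, Computable₂ F ∧ ∀ x, ∃ N, ∀ s ≥ N, (F s x = true ↔ x ∈ A)

/-- Π⁰₂ subsets of ℕ. -/
def Pi2 (S : Set ℕ) : Prop :=
  ∃ R : ℕ × ℕ × ℕ → Bool, Computable R ∧ S = {e | ∀ a, ∃ b, R (e, a, b) = true}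

/-- Π⁰₃ subsets of ℕ. -/
def Pi3 (S : Set ℕ) : Prop :=
  ∃ R : ℕ × ℕ × ℕ × ℕ → Bool, Computable R ∧ S = {e | ∀ a, ∃ b, ∀ c, R (e, a, b, c) = true}

/-- Π⁰₄ subsets of ℕ. -/
def Pi4 (S : Set ℕ) : Prop :=
  ∃ R : ℕ × ℕ × ℕ × ℕ × ℕ → Bool, Computable R ∧
    S = {e | ∀ a, ∃ b, ∀ c, ∃ d, R (e, a, b, c, d) = true}

/-- Π¹₁ subsets of ℕ (Kleene normal form). -/
def Pi11 (S : Set ℕ) : Prop :=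
  ∃ R : ℕ × List ℕ → Bool, Computable R ∧
    S = {e | ∀ f : ℕ → ℕ, ∃ n, R (e, funToList f n) = true}

/-- Many-one reducibility. -/
def ManyOneRed (T S : Set ℕ) : Prop := ∃ h : ℕ → ℕ, Computable h ∧ ∀ e, e ∈ T ↔ h e ∈ S

def Pi2Complete (S : Set ℕ) : Prop := Pi2 S ∧ ∀ T, Pi2 T → ManyOneRed T S
def Pi3Complete (S : Set ℕ) : Prop := Pi3 S ∧ ∀ T, Pi3 T → ManyOneRed T S
def Pi4Complete (S : Set ℕ) : Prop := Pi4 S ∧ ∀ T, Pi4 T → ManyOneRed T S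
def Pi11Complete (S : Set ℕ) : Prop := Pi11 S ∧ ∀ T, Pi11 T → ManyOneRed T S

/-- `g` is an `n`-bounded diagonally non-computable function. -/
def DNCb (n : ℕ) (g : ℕ → ℕ) : Prop := (∀ x, g x < n) ∧ ∀ x y, y ∈ phi x x → g x ≠ y

/-- `g` is diagonally non-computable. -/
def DNCfun (g : ℕ → ℕ) : Prop := ∀ x y, y ∈ phi x x → g x ≠ y

/-- `A` is immune: infinite with no infinite c.e. subset. -/
def Immune (A : Set ℕ) : Prop := A.Infinite ∧ ∀ B, CE B → B.Infinite → ¬B ⊆ A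

/-- `A` is bi-immune. -/
def BiImmune (A : Set ℕ) : Prop := Immune A ∧ Immune Aᶜ

/-- `f` is strongly non-recursive. -/
def SNR (f : ℕ → ℕ) : Prop :=
  ∀ h : ℕ → ℕ, Computable h → ∀ᶠ n in Filter.atTop, f n ≠ h n

/-- A canonical numbering of all finite sets (presented as lists). -/
def CanonicalNumbering (H : ℕ → List ℕ) : Prop :=
  Computable H ∧ ∀ S : Finset ℕ, ∃ e, (H e).toFinset = S

/-- `R` is canonically immune. -/
def CanonImmune (R : Set ℕ) : Prop :=
  R.Infinite ∧ ∃ h : ℕ → ℕ, Computable h ∧ ∀ H, CanonicalNumbering H →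
    ∀ᶠ e in Filter.atTop, (∀ x ∈ H e, x ∈ R) → (H e).toFinset.card ≤ h e

/-- A Medvedev reduction of `F` (class of total functions) to `G` (class of partial oracles):
a single code `e` such that `{e}^g` is total and in `F` for every `g ∈ G`. -/
def MedvedevRed (F : Set (ℕ → ℕ)) (G : Set (ℕ →. ℕ)) : Prop :=
  ∃ e : ℕ, ∀ g ∈ G, ∃ f ∈ F, ∀ x, OEval e g x = Part.some (f x)

/-- The set `G[F]` of `G`-universal `F`-codes, for classes of partial oracles `G`
and total functions `F`. -/
def UnivCodes (G : Set (ℕ →. ℕ)) (F : Set (ℕ → ℕ)) : Set ℕ :=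
  {e | ∀ g ∈ G, ∃ f ∈ F, ∀ x, OEval e g x = Part.some (f x)}

/-- The set `G[F]` with total oracles. -/
def UnivCodesT (G : Set (ℕ → ℕ)) (F : Set (ℕ → ℕ)) : Set ℕ :=
  {e | ∀ g ∈ G, ∃ f ∈ F, ∀ x, OEval e (totalize g) x = Part.some (f x)}

open Classical in
noncomputable def UnivCodesSet (A : Set (ℕ → ℕ)) (B : Set (Set ℕ)) : Set ℕ :=
  {e | ∀ Y ∈ A, ∃ S ∈ B, ∀ x, OEval e (totalize Y) x = Part.some (if x ∈ S then 1 else 0)}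

/-- Π¹₁ classes of functions. -/
def Pi11Fun (C : Set (ℕ → ℕ)) : Prop :=
  ∃ R : List ℕ × List ℕ → Bool, Computable R ∧
    C = {f | ∀ g : ℕ → ℕ, ∃ n, R (funToList f n, funToList g n) = true}

/-- Σ¹₁ classes of functions. -/
def Sigma11Fun (C : Set (ℕ → ℕ)) : Prop :=
  ∃ R : List ℕ × List ℕ → Bool, Computable R ∧
    C = {f | ∃ g : ℕ → ℕ, ∀ n, R (funToList f n, funToList g n) = true}

/-- Hyperarithmetic (Δ¹₁) classes of functions. -/
def Hyp (C : Set (ℕ → ℕ)) : Prop := Pi11Fun C ∧ Sigma11Fun C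

/-- Hyperarithmetic classes of sets, via characteristic functions. -/
def HypSet (C : Set (Set ℕ)) : Prop :=
  Hyp {f | (∀ n, f n ≤ 1) ∧ {n | f n = 1} ∈ C}

/-- `B` is a tail set: closed under finite modifications. -/
def TailSet (B : Set (Set ℕ)) : Prop :=
  ∀ S T : Set ℕ, (S \ T ∪ T \ S).Finite → S ∈ B → T ∈ B

/-- Proper extension of finite strings. -/
def StrictPrefix (α β : List ℕ) : Prop := α <+: β ∧ α ≠ β

/-- A `Δ⁰₂` embedding of Baire space, given by a uniformly computable sequence of
`≺`-isomorphisms on finite strings converging pointwise to `fstar`, inducing `toFun`. -/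
structure Delta02Embedding where
  fs : ℕ → List ℕ → List ℕ
  fstar : List ℕ → List ℕ
  toFun : (ℕ → ℕ) → (ℕ → ℕ)
  computable : Computable₂ fs
  iso : ∀ s α β, StrictPrefix α β ↔ StrictPrefix (fs s α) (fs s β)
  limit : ∀ α, ∃ N, ∀ s ≥ N, fs s α = fstar α
  union : ∀ X n, fstar (funToList X n) = funToList (toFun X) (fstar (funToList X n)).length
  unbounded : ∀ X k, ∃ n, k ≤ (fstar (funToList X n)).length

/-- Π⁰₂ classes of functions. -/
def Pi02Class (P : Set (ℕ → ℕ)) : Prop :=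
  ∃ h : ℕ → ℕ → List ℕ, Computable₂ h ∧
    P = {X | ∀ n, ∃ s, h n s = funToList X (h n s).length}

/-- `{e}` is total. -/
def TotCode (e : ℕ) : Prop := ∀ i, (phi e i).Dom

/-- The computable tree coded by `e`: the downward closure of `{ρ_i : {e}(i) = 1}`. -/
def TreeOf (e : ℕ) : Set (List ℕ) :=
  {σ | ∃ τ : List ℕ, σ <+: τ ∧ ∃ i : ℕ, Denumerable.ofNat (List ℕ) i = τ ∧ 1 ∈ phi e i}

/-- Codes of total functions whose coded tree has no infinite branch. -/
def NoPath : Set ℕ :=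
  {e | TotCode e ∧ ¬∃ X : ℕ → ℕ, ∀ n, funToList X n ∈ TreeOf e}

/-- The set Δ⁰₂[FIN] of codes with finite domain on every Δ⁰₂ oracle. -/
def Delta02FIN : Set ℕ :=
  {e | ∀ A : Set ℕ, Delta02 A → {x | (OEval e (chi A) x).Dom}.Finite}

/-! ### Auxiliary development -/

namespace D02FIN

open Nat.Partrec (Code)
open Nat.Partrec.Code

/-- Oracle inclusion. -/
def OSub (g g' : ℕ →. ℕ) : Prop := ∀ n a, a ∈ g n → a ∈ g' n

theorem OCode.eval_mono {g g' : ℕ →. ℕ} (h : OSub g g') :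
    ∀ (c : OCode) (x y : ℕ), y ∈ c.eval g x → y ∈ c.eval g' x := by
  intro c
  induction c with
  | zero => exact fun x y hy => hy
  | succ => exact fun x y hy => hy
  | left => exact fun x y hy => hy
  | right => exact fun x y hy => hy
  | oracle => exact fun x y hy => h x y hy
  | pair a b iha ihb =>
    intro x y hy
    simp only [OCode.eval, Seq.seq, Part.bind_eq_bind, Part.map_eq_map, Part.mem_bind_iff,
      Part.mem_map_iff] at hy ⊢
    obtain ⟨g0, ⟨u, hu, rfl⟩, v, hv, rfl⟩ := hy
    exact ⟨_, ⟨u, iha _ _ hu, rfl⟩, v, ihb _ _ hv, rfl⟩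
  | comp a b iha ihb =>
    intro x y hy
    simp only [OCode.eval, Part.bind_eq_bind, Part.mem_bind_iff] at hy ⊢
    obtain ⟨u, hu, hy⟩ := Part.mem_bind_iff.1 hy
    exact Part.mem_bind_iff.2 ⟨u, ihb _ _ hu, iha _ _ hy⟩
  | prec a b iha ihb =>
    intro x y
    simp only [OCode.eval, Nat.unpaired]
    generalize x.unpair.1 = m
    generalize x.unpair.2 = n
    induction n generalizing y with
    | zero => exact iha _ _
    | succ n ihn =>
      intro hy
      simp only [Part.bind_eq_bind, Part.mem_bind_iff] at hy ⊢
      obtain ⟨i, hi, hy⟩ := hy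
      exact ⟨i, ihn _ hi, ihb _ _ hy⟩
  | rfind' a iha =>
    intro x y hy
    simp only [OCode.eval, Nat.unpaired, Part.map_eq_map, Part.mem_map_iff] at hy ⊢
    obtain ⟨k, hk, rfl⟩ := hy
    refine ⟨k, ?_, rfl⟩
    replace hk := Nat.mem_rfind.1 hk
    apply Nat.mem_rfind.2
    constructor
    · obtain ⟨v, hv, hv0⟩ := (Part.mem_map_iff _).1 hk.1
      exact (Part.mem_map_iff _).2 ⟨v, iha _ _ hv, hv0⟩
    · intro j hj
      obtain ⟨v, hv, hv0⟩ := (Part.mem_map_iff _).1 (hk.2 hj)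
      exact (Part.mem_map_iff _).2 ⟨v, iha _ _ hv, hv0⟩

/-- Cutting an oracle below `u`. -/
def cut (g : ℕ →. ℕ) (u : ℕ) : ℕ →. ℕ := fun n => if n < u then g n else Part.none

theorem cut_sub_self (g : ℕ →. ℕ) (u : ℕ) : OSub (cut g u) g := by
  intro n a ha
  by_cases h : n < u <;> simp [cut, h] at ha
  · exact ha

theorem cut_mono (g : ℕ →. ℕ) {u v : ℕ} (huv : u ≤ v) : OSub (cut g u) (cut g v) := by
  intro n a ha
  by_cases h : n < u <;> simp [cut, h] at ha
  · simp [cut, lt_of_lt_of_le h huv, ha]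

theorem OCode.eval_compact {g : ℕ →. ℕ} :
    ∀ (c : OCode) (x y : ℕ), y ∈ c.eval g x → ∃ u, y ∈ c.eval (cut g u) x := by
  intro c
  induction c with
  | zero => exact fun x y hy => ⟨0, hy⟩
  | succ => exact fun x y hy => ⟨0, hy⟩
  | left => exact fun x y hy => ⟨0, hy⟩
  | right => exact fun x y hy => ⟨0, hy⟩
  | oracle => exact fun x y hy => ⟨x + 1, by simpa [OCode.eval, cut] using hy⟩
  | pair a b iha ihb =>
    intro x y hy
    simp only [OCode.eval, Seq.seq, Part.bind_eq_bind, Part.map_eq_map, Part.mem_bind_iff,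
      Part.mem_map_iff] at hy ⊢
    obtain ⟨g0, ⟨u, hu, rfl⟩, v, hv, rfl⟩ := hy
    obtain ⟨u1, hu1⟩ := iha _ _ hu
    obtain ⟨u2, hu2⟩ := ihb _ _ hv
    exact ⟨max u1 u2, _, ⟨u, OCode.eval_mono (cut_mono g (le_max_left _ _)) _ _ _ hu1, rfl⟩, v,
      OCode.eval_mono (cut_mono g (le_max_right _ _)) _ _ _ hu2, rfl⟩
  | comp a b iha ihb =>
    intro x y hy
    simp only [OCode.eval, Part.bind_eq_bind, Part.mem_bind_iff] at hy ⊢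
    obtain ⟨u, hu, hy⟩ := Part.mem_bind_iff.1 hy
    obtain ⟨u1, hu1⟩ := ihb _ _ hu
    obtain ⟨u2, hu2⟩ := iha _ _ hy
    exact ⟨max u1 u2, Part.mem_bind_iff.2 ⟨u, OCode.eval_mono (cut_mono g (le_max_left _ _)) _ _ _ hu1,
      OCode.eval_mono (cut_mono g (le_max_right _ _)) _ _ _ hu2⟩⟩
  | prec a b iha ihb =>
    have step0 : ∀ (h : ℕ →. ℕ) m, OCode.eval h (.prec a b) (Nat.pair m 0) =
        OCode.eval h a m := by
      intro h m
      simp only [OCode.eval, Nat.unpaired, Nat.unpair_pair]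
      rfl
    have step : ∀ (h : ℕ →. ℕ) m n, OCode.eval h (.prec a b) (Nat.pair m (n + 1)) =
        OCode.eval h (.prec a b) (Nat.pair m n) >>= fun i =>
          OCode.eval h b (Nat.pair m (Nat.pair n i)) := by
      intro h m n
      simp only [OCode.eval, Nat.unpaired, Nat.unpair_pair]
    have key : ∀ m n y, y ∈ OCode.eval g (.prec a b) (Nat.pair m n) →
        ∃ u, y ∈ OCode.eval (cut g u) (.prec a b) (Nat.pair m n) := by
      intro m n
      induction n with
      | zero =>
        intro y hy
        rw [step0] at hy
        obtain ⟨u, hu⟩ := iha _ _ hy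
        exact ⟨u, by rw [step0]; exact hu⟩
      | succ n ihn =>
        intro y hy
        rw [step] at hy
        simp only [Part.bind_eq_bind, Part.mem_bind_iff] at hy
        obtain ⟨i, hi, hy⟩ := hy
        obtain ⟨u1, hu1⟩ := ihn i hi
        obtain ⟨u2, hu2⟩ := ihb _ _ hy
        refine ⟨max u1 u2, ?_⟩
        rw [step]
        simp only [Part.bind_eq_bind, Part.mem_bind_iff]
        exact ⟨i, OCode.eval_mono (cut_mono g (le_max_left _ _)) _ _ _ hu1,
          OCode.eval_mono (cut_mono g (le_max_right _ _)) _ _ _ hu2⟩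
    intro x y hy
    obtain ⟨u, hu⟩ := key x.unpair.1 x.unpair.2 y (by rwa [Nat.pair_unpair])
    exact ⟨u, by rwa [Nat.pair_unpair] at hu⟩
  | rfind' a iha =>
    intro x y hy
    simp only [OCode.eval, Nat.unpaired, Part.map_eq_map, Part.mem_map_iff] at hy ⊢
    obtain ⟨k, hk, rfl⟩ := hy
    replace hk := Nat.mem_rfind.1 hk
    have H : ∀ j, j ≤ k → ∃ u v, v ∈ a.eval (cut g u) (Nat.pair x.unpair.1 (j + x.unpair.2)) ∧
        (decide (v = 0) = decide (j = k)) := by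
      intro j hj
      rcases eq_or_lt_of_le hj with rfl | hj
      · obtain ⟨v, hv, hv0⟩ := (Part.mem_map_iff _).1 hk.1
        obtain ⟨u, hu⟩ := iha _ _ hv
        exact ⟨u, v, hu, by simp [hv0]⟩
      · obtain ⟨v, hv, hv0⟩ := (Part.mem_map_iff _).1 (hk.2 hj)
        obtain ⟨u, hu⟩ := iha _ _ hv
        exact ⟨u, v, hu, by simp [of_decide_eq_false hv0, Nat.ne_of_lt hj]⟩
    choose! u v hv hv0 using H
    refine ⟨(Finset.range (k + 1)).sup u, k, ?_, rfl⟩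
    apply Nat.mem_rfind.2
    constructor
    · refine (Part.mem_map_iff _).2 ⟨v k, OCode.eval_mono (cut_mono g ?_) _ _ _ (hv k le_rfl),
        by simpa using hv0 k le_rfl⟩
      exact Finset.le_sup (Finset.mem_range.2 (Nat.lt_succ_self k))
    · intro j hj
      refine (Part.mem_map_iff _).2 ⟨v j, OCode.eval_mono (cut_mono g ?_) _ _ _ (hv j hj.le), ?_⟩
      · exact Finset.le_sup (Finset.mem_range.2 (Nat.lt_succ_of_lt hj))
      · simpa [Nat.ne_of_lt hj] using hv0 j hj.le

end D02FIN
namespace D02FIN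
open Nat.Partrec (Code)
open Nat.Partrec.Code

/-- Substituting a concrete code for the oracle. -/
def transO : OCode → Code → Code
  | .zero, _ => .zero
  | .succ, _ => .succ
  | .left, _ => .left
  | .right, _ => .right
  | .oracle, o => o
  | .pair a b, o => .pair (transO a o) (transO b o)
  | .comp a b, o => .comp (transO a o) (transO b o)
  | .prec a b, o => .prec (transO a o) (transO b o)
  | .rfind' a, o => .rfind' (transO a o)

theorem transO_eval (o : Code) : ∀ c : OCode, (transO c o).eval = c.eval o.eval := by
  intro c
  induction c with
  | zero => rfl
  | succ => rfl
  | left => rfl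
  | right => rfl
  | oracle => rfl
  | pair a b iha ihb =>
    funext x; simp [transO, OCode.eval, Nat.Partrec.Code.eval, iha, ihb]
  | comp a b iha ihb =>
    funext x; simp [transO, OCode.eval, Nat.Partrec.Code.eval, iha, ihb]
  | prec a b iha ihb =>
    funext x; simp [transO, OCode.eval, Nat.Partrec.Code.eval, iha, ihb]
  | rfind' a iha =>
    funext x; simp [transO, OCode.eval, Nat.Partrec.Code.eval, iha]

/-- A finite list as a partial oracle. -/
def gl (σ : List ℕ) : ℕ →. ℕ := fun n => Part.ofOption (σ[n]?)

theorem listBase_partrec : Nat.Partrec fun p : ℕ =>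
    Part.ofOption ((Denumerable.ofNat (List ℕ) p.unpair.1)[p.unpair.2]?) := by
  have h1 : Primrec fun p : ℕ => (Denumerable.ofNat (List ℕ) p.unpair.1)[p.unpair.2]? :=
    Primrec.list_getElem?.comp ((Primrec.ofNat _).comp (Primrec.fst.comp Primrec.unpair))
      (Primrec.snd.comp Primrec.unpair)
  exact Partrec.nat_iff.1 (Computable.ofOption h1.to_comp)

noncomputable def baseCode : Code := (exists_code.1 listBase_partrec).choose

theorem baseCode_eval : baseCode.eval = fun p : ℕ =>
    Part.ofOption ((Denumerable.ofNat (List ℕ) p.unpair.1)[p.unpair.2]?) :=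
  (exists_code.1 listBase_partrec).choose_spec

noncomputable def codeFor (m : ℕ) : Code :=
  Code.comp baseCode (Code.pair (Code.const m) Code.id)

theorem codeFor_eval (m : ℕ) : (codeFor m).eval = gl (Denumerable.ofNat (List ℕ) m) := by
  funext x
  simp [codeFor, Nat.Partrec.Code.eval, baseCode_eval, eval_const, eval_id, Seq.seq,
    Nat.unpair_pair, gl]

theorem codeFor_primrec : Primrec codeFor :=
  primrec₂_comp.comp (Primrec.const baseCode)
    (primrec₂_pair.comp primrec_const (Primrec.const Code.id))

/-- The translated code of oracle machine `e` with finite oracle coded by `m`. -/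
noncomputable def transN (m e : ℕ) : Code := transO (OCode.ofNat e) (codeFor m)

theorem transN_eval (m e : ℕ) :
    (transN m e).eval = OCode.eval (gl (Denumerable.ofNat (List ℕ) m)) (OCode.ofNat e) := by
  rw [transN, transO_eval, codeFor_eval]

end D02FIN
namespace D02FIN
open Nat.Partrec (Code)
open Nat.Partrec.Code

/-- Course-of-values step function for `transN`. -/
noncomputable def GStep (m : ℕ) (l : List Code) : Option Code :=
  if l.length = 0 then some Code.zero
  else if l.length = 1 then some Code.succ
  else if l.length = 2 then some Code.left
  else if l.length = 3 then some Code.right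
  else if l.length = 4 then some (codeFor m)
  else
    cond (l.length - 5).bodd
      (cond (l.length - 5).div2.bodd
        ((l[(l.length - 5).div2.div2]?).map Code.rfind')
        ((l[(l.length - 5).div2.div2.unpair.1]?).bind fun c1 =>
          (l[(l.length - 5).div2.div2.unpair.2]?).map (Code.prec c1)))
      (cond (l.length - 5).div2.bodd
        ((l[(l.length - 5).div2.div2.unpair.1]?).bind fun c1 =>
          (l[(l.length - 5).div2.div2.unpair.2]?).map (Code.comp c1))
        ((l[(l.length - 5).div2.div2.unpair.1]?).bind fun c1 =>
          (l[(l.length - 5).div2.div2.unpair.2]?).map (Code.pair c1)))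

theorem GStep_primrec : Primrec₂ GStep := by
  have L : Primrec fun a : ℕ × List Code => a.2.length :=
    Primrec.list_length.comp Primrec.snd
  have K : Primrec fun a : ℕ × List Code => a.2.length - 5 :=
    Primrec.nat_sub.comp L (Primrec.const 5)
  have P : Primrec fun a : ℕ × List Code => (a.2.length - 5).div2.div2 :=
    Primrec.nat_div2.comp (Primrec.nat_div2.comp K)
  have getp : Primrec fun a : ℕ × List Code => a.2[((a.2.length - 5).div2.div2)]? :=
    Primrec.list_getElem?.comp Primrec.snd P
  have get1 : Primrec fun a : ℕ × List Code => a.2[((a.2.length - 5).div2.div2).unpair.1]? :=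
    Primrec.list_getElem?.comp Primrec.snd (Primrec.fst.comp (Primrec.unpair.comp P))
  have get2 : Primrec fun a : ℕ × List Code => a.2[((a.2.length - 5).div2.div2).unpair.2]? :=
    Primrec.list_getElem?.comp Primrec.snd (Primrec.snd.comp (Primrec.unpair.comp P))
  have mapRf : Primrec fun a : ℕ × List Code =>
      (a.2[((a.2.length - 5).div2.div2)]?).map Code.rfind' :=
    Primrec.option_map getp ((primrec_rfind'.comp Primrec.snd).to₂)
  have combo : ∀ F : Code → Code → Code, Primrec₂ F →
      Primrec fun a : ℕ × List Code =>
        (a.2[((a.2.length - 5).div2.div2).unpair.1]?).bind fun c1 =>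
          (a.2[((a.2.length - 5).div2.div2).unpair.2]?).map (F c1) := by
    intro F hF
    exact Primrec.option_bind get1
      ((Primrec.option_map (get2.comp Primrec.fst)
        ((hF.comp (Primrec.snd.comp Primrec.fst) Primrec.snd).to₂)).to₂)
  have bodd1 : Primrec fun a : ℕ × List Code => (a.2.length - 5).bodd :=
    Primrec.nat_bodd.comp K
  have bodd2 : Primrec fun a : ℕ × List Code => (a.2.length - 5).div2.bodd :=
    Primrec.nat_bodd.comp (Primrec.nat_div2.comp K)
  have hbig : Primrec fun a : ℕ × List Code =>
      cond (a.2.length - 5).bodd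
        (cond (a.2.length - 5).div2.bodd
          ((a.2[((a.2.length - 5).div2.div2)]?).map Code.rfind')
          ((a.2[((a.2.length - 5).div2.div2).unpair.1]?).bind fun c1 =>
            (a.2[((a.2.length - 5).div2.div2).unpair.2]?).map (Code.prec c1)))
        (cond (a.2.length - 5).div2.bodd
          ((a.2[((a.2.length - 5).div2.div2).unpair.1]?).bind fun c1 =>
            (a.2[((a.2.length - 5).div2.div2).unpair.2]?).map (Code.comp c1))
          ((a.2[((a.2.length - 5).div2.div2).unpair.1]?).bind fun c1 =>
            (a.2[((a.2.length - 5).div2.div2).unpair.2]?).map (Code.pair c1))) :=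
    Primrec.cond bodd1
      (Primrec.cond bodd2 mapRf (combo _ primrec₂_prec))
      (Primrec.cond bodd2 (combo _ primrec₂_comp) (combo _ primrec₂_pair))
  have heq : ∀ i : ℕ, PrimrecPred fun a : ℕ × List Code => a.2.length = i := by
    intro i
    exact Primrec.eq.comp L (Primrec.const i)
  exact Primrec.ite (heq 0) (Primrec.const (some Code.zero)) <|
    Primrec.ite (heq 1) (Primrec.const (some Code.succ)) <|
    Primrec.ite (heq 2) (Primrec.const (some Code.left)) <|
    Primrec.ite (heq 3) (Primrec.const (some Code.right)) <|
    Primrec.ite (heq 4) (Primrec.option_some.comp (codeFor_primrec.comp Primrec.fst)) hbig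

theorem transN_primrec : Primrec₂ transN := by
  apply Primrec.nat_strong_rec _ GStep_primrec
  intro m n
  match n with
  | 0 => simp [GStep, transN, OCode.ofNat, transO]
  | 1 => simp [GStep, transN, OCode.ofNat, transO]
  | 2 => simp [GStep, transN, OCode.ofNat, transO]
  | 3 => simp [GStep, transN, OCode.ofNat, transO]
  | 4 => simp [GStep, transN, OCode.ofNat, transO]
  | n + 5 =>
    have hm : n.div2.div2 < n + 5 := by
      simp only [Nat.div2_val]
      exact lt_of_le_of_lt (le_trans (Nat.div_le_self _ _) (Nat.div_le_self _ _)) (by omega)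
    have hm1 : n.div2.div2.unpair.1 < n + 5 := lt_of_le_of_lt (Nat.unpair_left_le _) hm
    have hm2 : n.div2.div2.unpair.2 < n + 5 := lt_of_le_of_lt (Nat.unpair_right_le _) hm
    have hl : ((List.range (n + 5)).map (transN m)).length = n + 5 := by simp
    have hget : ∀ i, i < n + 5 →
        ((List.range (n + 5)).map (transN m))[i]? = some (transN m i) := by
      intro i hi
      simp only [List.getElem?_map, List.getElem?_range hi,
        Option.map_some]
    simp only [GStep, hl, Nat.add_sub_cancel]
    rw [if_neg (by omega), if_neg (by omega), if_neg (by omega), if_neg (by omega),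
      if_neg (by omega)]
    rw [hget _ hm, hget _ hm1, hget _ hm2]
    have : transN m (n + 5) = transO (OCode.ofNat (n + 5)) (codeFor m) := rfl
    rw [this]
    simp only [OCode.ofNat]
    cases hb : n.bodd <;> cases hb2 : n.div2.bodd <;>
      simp [transN, transO, hb, hb2]

end D02FIN
namespace D02FIN
open Nat.Partrec (Code)
open Nat.Partrec.Code

def bitv (v : ℕ) : ℕ := if v = 1 then 1 else 0

/-- `d` codes a total function with pointwise limits on each column: a Δ⁰₂ code. -/
def GoodD02 (d : ℕ) : Prop :=
  (∀ x, (phi d x).Dom) ∧ ∀ x, ∃ N, ∀ s t, N ≤ s → N ≤ t →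
    (1 ∈ phi d (Nat.pair s x) ↔ 1 ∈ phi d (Nat.pair t x))

/-- The Δ⁰₂ set coded by `d`. -/
def ASet (d : ℕ) : Set ℕ := {x | ∃ N, ∀ t, N ≤ t → 1 ∈ phi d (Nat.pair t x)}

theorem stable_char {d : ℕ} (hd : GoodD02 d) (i : ℕ) :
    ∃ N, ∀ t, N ≤ t → ∀ v, v ∈ phi d (Nat.pair t i) → (v = 1 ↔ i ∈ ASet d) := by
  obtain ⟨N, hN⟩ := hd.2 i
  refine ⟨N, fun t ht v hv => ⟨fun h1 => ?_, fun hA => ?_⟩⟩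
  · subst h1
    exact ⟨N, fun t' ht' => (hN t t' ht ht').1 hv⟩
  · obtain ⟨N', hN'⟩ := hA
    have h1 : 1 ∈ phi d (Nat.pair (max N N') i) := hN' _ (le_max_right _ _)
    have h2 : 1 ∈ phi d (Nat.pair t i) := (hN (max N N') t (le_max_left _ _) ht).1 h1
    exact Part.mem_unique hv h2

theorem good_delta02 {d : ℕ} (hd : GoodD02 d) : Delta02 (ASet d) := by
  classical
  have tot := hd.1
  set Gf : ℕ → ℕ := fun x => (phi d x).get (tot x) with hGfdef
  have hp : Partrec (phi d) :=
    Nat.Partrec.Code.eval_part.comp (Computable.const _) Computable.id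
  have hGf : Computable Gf := hp.of_eq fun n => (Part.some_get _).symm
  refine ⟨fun s x => decide (Gf (Nat.pair s x) = 1), ?_, ?_⟩
  · have h1 : Computable fun p : ℕ × ℕ => Gf (Nat.pair p.1 p.2) :=
      hGf.comp (Primrec₂.natPair.to_comp.comp Computable.fst Computable.snd)
    have h2 : Primrec fun n : ℕ => decide (n = 1) :=
      (Primrec.eq.comp Primrec.id (Primrec.const 1)).decide
    exact h2.to_comp.comp h1
  · intro x
    obtain ⟨N, hN⟩ := stable_char hd x
    refine ⟨N, fun s hs => ?_⟩
    have hv : Gf (Nat.pair s x) ∈ phi d (Nat.pair s x) := Part.get_mem _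
    have := hN s hs _ hv
    simpa using this

theorem delta02_code {A : Set ℕ} (hA : Delta02 A) : ∃ d, GoodD02 d ∧ ASet d = A := by
  obtain ⟨F, hF, hlim⟩ := hA
  set h : ℕ → ℕ := fun p => cond (F p.unpair.1 p.unpair.2) 1 0 with hhdef
  have hh : Computable h := by
    have h1 : Computable fun p : ℕ => F p.unpair.1 p.unpair.2 :=
      hF.comp (Computable.fst.comp Primrec.unpair.to_comp)
        (Computable.snd.comp Primrec.unpair.to_comp)
    exact Computable.cond h1 (Computable.const 1) (Computable.const 0)
  obtain ⟨c, hc⟩ := exists_code.1 (Partrec.nat_iff.1 hh.partrec)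
  have hphi : ∀ x, phi (Encodable.encode c) x = Part.some (h x) := by
    intro x
    show (Denumerable.ofNat Code (Encodable.encode c)).eval x = _
    rw [Denumerable.ofNat_encode, hc]
    rfl
  have hval : ∀ s x, (1 ∈ phi (Encodable.encode c) (Nat.pair s x)) ↔ F s x = true := by
    intro s x
    rw [hphi, Part.mem_some_iff, hhdef]
    simp [Nat.unpair_pair]
    cases hfx : F s x <;> simp
  refine ⟨Encodable.encode c, ⟨fun x => by rw [hphi]; trivial, fun x => ?_⟩, ?_⟩
  · obtain ⟨N, hN⟩ := hlim x
    refine ⟨N, fun s t hs ht => ?_⟩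
    rw [hval, hval, hN s hs, hN t ht]
  · ext x
    simp only [ASet, Set.mem_setOf_eq]
    constructor
    · rintro ⟨N, hN⟩
      obtain ⟨M, hM⟩ := hlim x
      have := (hval (max N M) x).1 (hN _ (le_max_left _ _))
      exact (hM _ (le_max_right _ _)).1 this
    · intro hx
      obtain ⟨M, hM⟩ := hlim x
      exact ⟨M, fun t ht => (hval t x).2 ((hM t ht).2 hx)⟩

/-- Arithmetical description of halting on the Δ⁰₂ oracle coded by `d`. -/
def HaltP (e d x : ℕ) : Prop := ∃ m k s : ℕ,
  (Nat.Partrec.Code.evaln k (transN m e) x).isSome ∧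
  ∀ t k' i v, s ≤ t → i < (Denumerable.ofNat (List ℕ) m).length →
    Nat.Partrec.Code.evaln k' (Denumerable.ofNat Code d) (Nat.pair t i) = some v →
    (Denumerable.ofNat (List ℕ) m).getD i 0 = bitv v

theorem haltP_iff {d : ℕ} (hd : GoodD02 d) (e x : ℕ) :
    (OEval e (chi (ASet d)) x).Dom ↔ HaltP e d x := by
  classical
  constructor
  · intro h
    obtain ⟨y, hy⟩ := Part.dom_iff_mem.1 h
    obtain ⟨u, hu⟩ := OCode.eval_compact (OCode.ofNat e) x y hy
    set σ : List ℕ := (List.range u).map (fun i => if i ∈ ASet d then 1 else 0) with hσdef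
    have hσlen : σ.length = u := by simp [hσdef]
    have hσget : ∀ i, i < u → σ.getD i 0 = (if i ∈ ASet d then 1 else 0) := by
      intro i hi
      simp [hσdef, List.getD, List.getElem?_map, List.getElem?_range hi]
    have hgl : gl σ = cut (chi (ASet d)) u := by
      funext n
      by_cases hn : n < u
      · simp [gl, cut, chi, hn, hσdef, List.getElem?_map,
          List.getElem?_range hn]
      · have hnone : (List.range u)[n]? = none :=
          List.getElem?_eq_none (by simpa using le_of_not_gt hn)
        simp [gl, cut, chi, hn, hσdef, hnone]
    have hy2 : y ∈ (transN (Encodable.encode σ) e).eval x := by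
      rw [transN_eval, Denumerable.ofNat_encode, hgl]
      exact hu
    obtain ⟨k, hk⟩ := evaln_complete.1 hy2
    have hNs := fun i => stable_char hd i
    choose N hN using hNs
    refine ⟨Encodable.encode σ, k, (Finset.range u).sup N, ?_, ?_⟩
    · rw [Option.isSome_iff_exists]
      exact ⟨y, hk⟩
    · intro t k' i v hts hi hev
      rw [Denumerable.ofNat_encode, hσlen] at hi
      rw [Denumerable.ofNat_encode, hσget i hi]
      have hsup : N i ≤ t :=
        le_trans (Finset.le_sup (Finset.mem_range.2 hi)) hts
      have hvmem : v ∈ phi d (Nat.pair t i) := evaln_sound hev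
      have hchar := hN i t hsup v hvmem
      by_cases hiA : i ∈ ASet d
      · simp [hiA, bitv, hchar.2 hiA]
      · have hv1 : v ≠ 1 := fun h1 => hiA (hchar.1 h1)
        simp [hiA, bitv, hv1]
  · rintro ⟨m, k, s, hsome, hst⟩
    obtain ⟨y, hy⟩ := Option.isSome_iff_exists.1 hsome
    have hy2 : y ∈ (transN m e).eval x := evaln_sound hy
    rw [transN_eval] at hy2
    set σ := Denumerable.ofNat (List ℕ) m with hσdef
    have hsub : OSub (gl σ) (chi (ASet d)) := by
      intro n a ha
      rw [gl, Part.mem_ofOption, Option.mem_def] at ha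
      have hlen : n < σ.length := by
        by_contra hn
        rw [List.getElem?_eq_none (le_of_not_gt hn)] at ha
        cases ha
      have hgd : σ.getD n 0 = a := by
        simp [List.getD, ha]
      obtain ⟨N, hN⟩ := stable_char hd n
      have hdom : (phi d (Nat.pair (max s N) n)).Dom := hd.1 (Nat.pair (max s N) n)
      obtain ⟨k', hk'⟩ := evaln_complete.1 (Part.get_mem hdom)
      have hbit := hst (max s N) k' n _ (le_max_left _ _) hlen hk'
      have hchar := hN (max s N) (le_max_right _ _) _ (Part.get_mem hdom)
      by_cases hnA : n ∈ ASet d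
      · have hv1 : (phi d (Nat.pair (max s N) n)).get hdom = 1 := hchar.2 hnA
        have haa : a = 1 := by rw [← hgd, hbit, bitv]; simp [hv1]
        simp [chi, hnA, Part.mem_some_iff, haa]
      · have hv1 : (phi d (Nat.pair (max s N) n)).get hdom ≠ 1 := fun h1 => hnA (hchar.1 h1)
        have haa : a = 0 := by rw [← hgd, hbit, bitv]; simp [hv1]
        simp [chi, hnA, Part.mem_some_iff, haa]
    have := OCode.eval_mono hsub (OCode.ofNat e) x y hy2
    exact Part.dom_iff_mem.2 ⟨y, this⟩

end D02FIN
namespace D02FIN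
open Nat.Partrec (Code)
open Nat.Partrec.Code

theorem fin_iff {d : ℕ} (hd : GoodD02 d) (e : ℕ) :
    {x | (OEval e (chi (ASet d)) x).Dom}.Finite ↔ ∃ b, ∀ x, b ≤ x → ¬HaltP e d x := by
  constructor
  · intro hfin
    obtain ⟨b, hb⟩ := hfin.bddAbove
    refine ⟨b + 1, fun x hx hH => ?_⟩
    have hmem : x ∈ {x | (OEval e (chi (ASet d)) x).Dom} := (haltP_iff hd e x).2 hH
    have := hb hmem
    omega
  · rintro ⟨b, hb⟩
    apply Set.Finite.subset (Set.finite_Iio b)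
    intro x hx
    by_contra hxb
    exact hb x (le_of_not_gt hxb) ((haltP_iff hd e x).1 hx)

def core1 (o1 o2 : Option ℕ) : Bool :=
  (o1.bind fun v1 => o2.map fun v2 => decide (bitv v1 ≠ bitv v2)).getD false

def core2 (σ : List ℕ) (i : ℕ) (o : Option ℕ) : Bool :=
  (o.map fun v => decide (σ.getD i 0 ≠ bitv v)).getD false

theorem bitv_prim : Primrec bitv :=
  Primrec.ite (Primrec.eq.comp Primrec.id (Primrec.const 1)) (Primrec.const 1) (Primrec.const 0)

theorem core1_prim : Primrec₂ core1 := by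
  have h0 : Primrec fun q : (Option ℕ × Option ℕ) × ℕ × ℕ => decide (bitv q.2.1 ≠ bitv q.2.2) :=
    (PrimrecPred.not (Primrec.eq.comp (bitv_prim.comp (Primrec.fst.comp Primrec.snd))
      (bitv_prim.comp (Primrec.snd.comp Primrec.snd)))).decide
  have h1 : Primrec fun q : (Option ℕ × Option ℕ) × ℕ =>
      q.1.2.map fun v2 => decide (bitv q.2 ≠ bitv v2) :=
    Primrec.option_map (Primrec.snd.comp Primrec.fst)
      ((h0.comp ((Primrec.fst.comp Primrec.fst).pair
        ((Primrec.snd.comp Primrec.fst).pair Primrec.snd))).to₂)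
  have h2 : Primrec fun p : Option ℕ × Option ℕ =>
      p.1.bind fun v1 => p.2.map fun v2 => decide (bitv v1 ≠ bitv v2) :=
    Primrec.option_bind Primrec.fst (h1.to₂)
  exact (Primrec.option_getD.comp h2 (Primrec.const false)).to₂

theorem core2_prim : Primrec fun q : List ℕ × ℕ × Option ℕ => core2 q.1 q.2.1 q.2.2 := by
  refine Primrec.option_getD.comp ?_ (Primrec.const false)
  refine Primrec.option_map (Primrec.snd.comp Primrec.snd) ?_
  exact (PrimrecPred.not (Primrec.eq.comp
    ((Primrec.list_getD 0).comp (Primrec.fst.comp Primrec.fst)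
      ((Primrec.fst.comp Primrec.snd).comp Primrec.fst))
    (bitv_prim.comp Primrec.snd))).decide.to₂

/-- The Π⁰₄ matrix. -/
noncomputable def RFun (e d b c dd : ℕ) : Bool :=
  if b.unpair.1 = 0 then
    !(Nat.Partrec.Code.evaln c (Denumerable.ofNat Code d) b.unpair.2).isSome
  else if b.unpair.1 = 1 then
    decide (c ≤ dd.unpair.1.unpair.1) && (decide (c ≤ dd.unpair.1.unpair.2) &&
      core1
        (Nat.Partrec.Code.evaln dd.unpair.2.unpair.1 (Denumerable.ofNat Code d)
          (Nat.pair dd.unpair.1.unpair.1 b.unpair.2))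
        (Nat.Partrec.Code.evaln dd.unpair.2.unpair.2 (Denumerable.ofNat Code d)
          (Nat.pair dd.unpair.1.unpair.2 b.unpair.2)))
  else
    if c.unpair.1.unpair.1 < b.unpair.2 then true
    else if (Nat.Partrec.Code.evaln c.unpair.2.unpair.1 (transN c.unpair.1.unpair.2 e)
        c.unpair.1.unpair.1).isSome = false then true
    else
      decide (c.unpair.2.unpair.2 ≤ dd.unpair.1) &&
      (decide (dd.unpair.2.unpair.2 < (Denumerable.ofNat (List ℕ) c.unpair.1.unpair.2).length) &&
        core2 (Denumerable.ofNat (List ℕ) c.unpair.1.unpair.2) dd.unpair.2.unpair.2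
          (Nat.Partrec.Code.evaln dd.unpair.2.unpair.1 (Denumerable.ofNat Code d)
            (Nat.pair dd.unpair.1 dd.unpair.2.unpair.2)))

set_option maxHeartbeats 1000000 in
theorem RFun_computable : Computable fun p : ℕ × ℕ × ℕ × ℕ × ℕ =>
    RFun p.1 p.2.1 p.2.2.1 p.2.2.2.1 p.2.2.2.2 := by
  have hand : Primrec₂ (· && · : Bool → Bool → Bool) := Primrec.dom_bool₂ _
  have hnot : Primrec (! · : Bool → Bool) := Primrec.dom_bool _
  set α := ℕ × ℕ × ℕ × ℕ × ℕ with hα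
  have he : Primrec fun p : α => p.1 := Primrec.fst
  have hd : Primrec fun p : α => p.2.1 := Primrec.fst.comp Primrec.snd
  have hb : Primrec fun p : α => p.2.2.1 := Primrec.fst.comp (Primrec.snd.comp Primrec.snd)
  have hc : Primrec fun p : α => p.2.2.2.1 :=
    Primrec.fst.comp (Primrec.snd.comp (Primrec.snd.comp Primrec.snd))
  have hdd : Primrec fun p : α => p.2.2.2.2 :=
    Primrec.snd.comp (Primrec.snd.comp (Primrec.snd.comp Primrec.snd))
  have up1 : ∀ {f : α → ℕ}, Primrec f → Primrec fun p => (f p).unpair.1 :=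
    fun hf => Primrec.fst.comp (Primrec.unpair.comp hf)
  have up2 : ∀ {f : α → ℕ}, Primrec f → Primrec fun p => (f p).unpair.2 :=
    fun hf => Primrec.snd.comp (Primrec.unpair.comp hf)
  have hdcode : Primrec fun p : α => Denumerable.ofNat Code p.2.1 :=
    (Primrec.ofNat Code).comp hd
  have hevaln : ∀ {k : α → ℕ} {cd : α → Code} {x : α → ℕ}, Primrec k → Primrec cd →
      Primrec x → Primrec fun p => Nat.Partrec.Code.evaln (k p) (cd p) (x p) := by
    intro k cd x hk hcd hx
    exact primrec_evaln.comp ((hk.pair hcd).pair hx)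
  -- branch 0
  have hbr0 : Primrec fun p : α =>
      !(Nat.Partrec.Code.evaln p.2.2.2.1 (Denumerable.ofNat Code p.2.1)
        p.2.2.1.unpair.2).isSome :=
    hnot.comp (Primrec.option_isSome.comp (hevaln hc hdcode (up2 hb)))
  -- branch 1
  have ht1 : Primrec fun p : α => p.2.2.2.2.unpair.1.unpair.1 := up1 (up1 hdd)
  have ht2 : Primrec fun p : α => p.2.2.2.2.unpair.1.unpair.2 := up2 (up1 hdd)
  have hk1 : Primrec fun p : α => p.2.2.2.2.unpair.2.unpair.1 := up1 (up2 hdd)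
  have hk2 : Primrec fun p : α => p.2.2.2.2.unpair.2.unpair.2 := up2 (up2 hdd)
  have hev1 : Primrec fun p : α => Nat.Partrec.Code.evaln p.2.2.2.2.unpair.2.unpair.1
      (Denumerable.ofNat Code p.2.1) (Nat.pair p.2.2.2.2.unpair.1.unpair.1 p.2.2.1.unpair.2) :=
    hevaln hk1 hdcode (Primrec₂.natPair.comp ht1 (up2 hb))
  have hev2 : Primrec fun p : α => Nat.Partrec.Code.evaln p.2.2.2.2.unpair.2.unpair.2
      (Denumerable.ofNat Code p.2.1) (Nat.pair p.2.2.2.2.unpair.1.unpair.2 p.2.2.1.unpair.2) :=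
    hevaln hk2 hdcode (Primrec₂.natPair.comp ht2 (up2 hb))
  have hbr1 : Primrec fun p : α =>
      (decide (p.2.2.2.1 ≤ p.2.2.2.2.unpair.1.unpair.1) &&
        (decide (p.2.2.2.1 ≤ p.2.2.2.2.unpair.1.unpair.2) &&
        core1
          (Nat.Partrec.Code.evaln p.2.2.2.2.unpair.2.unpair.1 (Denumerable.ofNat Code p.2.1)
            (Nat.pair p.2.2.2.2.unpair.1.unpair.1 p.2.2.1.unpair.2))
          (Nat.Partrec.Code.evaln p.2.2.2.2.unpair.2.unpair.2 (Denumerable.ofNat Code p.2.1)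
            (Nat.pair p.2.2.2.2.unpair.1.unpair.2 p.2.2.1.unpair.2)))) :=
    hand.comp (Primrec.nat_le.comp hc ht1).decide
      (hand.comp (Primrec.nat_le.comp hc ht2).decide (core1_prim.comp hev1 hev2))
  -- branch 2
  have hx2 : Primrec fun p : α => p.2.2.2.1.unpair.1.unpair.1 := up1 (up1 hc)
  have hm2 : Primrec fun p : α => p.2.2.2.1.unpair.1.unpair.2 := up2 (up1 hc)
  have hk2' : Primrec fun p : α => p.2.2.2.1.unpair.2.unpair.1 := up1 (up2 hc)
  have hs2 : Primrec fun p : α => p.2.2.2.1.unpair.2.unpair.2 := up2 (up2 hc)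
  have hsig : Primrec fun p : α => Denumerable.ofNat (List ℕ) p.2.2.2.1.unpair.1.unpair.2 :=
    (Primrec.ofNat (List ℕ)).comp hm2
  have htr : Primrec fun p : α => transN p.2.2.2.1.unpair.1.unpair.2 p.1 :=
    transN_primrec.comp hm2 he
  have hev3 : Primrec fun p : α => Nat.Partrec.Code.evaln p.2.2.2.1.unpair.2.unpair.1
      (transN p.2.2.2.1.unpair.1.unpair.2 p.1) p.2.2.2.1.unpair.1.unpair.1 :=
    hevaln hk2' htr hx2
  have ht3 : Primrec fun p : α => p.2.2.2.2.unpair.1 := up1 hdd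
  have hi3 : Primrec fun p : α => p.2.2.2.2.unpair.2.unpair.2 := up2 (up2 hdd)
  have hev4 : Primrec fun p : α => Nat.Partrec.Code.evaln p.2.2.2.2.unpair.2.unpair.1
      (Denumerable.ofNat Code p.2.1) (Nat.pair p.2.2.2.2.unpair.1 p.2.2.2.2.unpair.2.unpair.2) :=
    hevaln hk1 hdcode (Primrec₂.natPair.comp ht3 hi3)
  have hcore2 : Primrec fun p : α =>
      core2 (Denumerable.ofNat (List ℕ) p.2.2.2.1.unpair.1.unpair.2) p.2.2.2.2.unpair.2.unpair.2
        (Nat.Partrec.Code.evaln p.2.2.2.2.unpair.2.unpair.1 (Denumerable.ofNat Code p.2.1)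
          (Nat.pair p.2.2.2.2.unpair.1 p.2.2.2.2.unpair.2.unpair.2)) :=
    core2_prim.comp (hsig.pair (hi3.pair hev4))
  have hbr2 : Primrec fun p : α =>
      (decide (p.2.2.2.1.unpair.2.unpair.2 ≤ p.2.2.2.2.unpair.1) &&
        (decide (p.2.2.2.2.unpair.2.unpair.2 <
            (Denumerable.ofNat (List ℕ) p.2.2.2.1.unpair.1.unpair.2).length) &&
        core2 (Denumerable.ofNat (List ℕ) p.2.2.2.1.unpair.1.unpair.2)
          p.2.2.2.2.unpair.2.unpair.2
          (Nat.Partrec.Code.evaln p.2.2.2.2.unpair.2.unpair.1 (Denumerable.ofNat Code p.2.1)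
            (Nat.pair p.2.2.2.2.unpair.1 p.2.2.2.2.unpair.2.unpair.2)))) :=
    hand.comp (Primrec.nat_le.comp hs2 ht3).decide
      (hand.comp (Primrec.nat_lt.comp hi3 (Primrec.list_length.comp hsig)).decide hcore2)
  have hfull : Primrec fun p : α =>
      (if p.2.2.1.unpair.1 = 0 then
        !(Nat.Partrec.Code.evaln p.2.2.2.1 (Denumerable.ofNat Code p.2.1)
          p.2.2.1.unpair.2).isSome
      else if p.2.2.1.unpair.1 = 1 then
        decide (p.2.2.2.1 ≤ p.2.2.2.2.unpair.1.unpair.1) &&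
          (decide (p.2.2.2.1 ≤ p.2.2.2.2.unpair.1.unpair.2) &&
          core1
            (Nat.Partrec.Code.evaln p.2.2.2.2.unpair.2.unpair.1 (Denumerable.ofNat Code p.2.1)
              (Nat.pair p.2.2.2.2.unpair.1.unpair.1 p.2.2.1.unpair.2))
            (Nat.Partrec.Code.evaln p.2.2.2.2.unpair.2.unpair.2 (Denumerable.ofNat Code p.2.1)
              (Nat.pair p.2.2.2.2.unpair.1.unpair.2 p.2.2.1.unpair.2)))
      else
        if p.2.2.2.1.unpair.1.unpair.1 < p.2.2.1.unpair.2 then true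
        else if (Nat.Partrec.Code.evaln p.2.2.2.1.unpair.2.unpair.1
            (transN p.2.2.2.1.unpair.1.unpair.2 p.1) p.2.2.2.1.unpair.1.unpair.1).isSome
            = false then true
        else
          decide (p.2.2.2.1.unpair.2.unpair.2 ≤ p.2.2.2.2.unpair.1) &&
          (decide (p.2.2.2.2.unpair.2.unpair.2 <
              (Denumerable.ofNat (List ℕ) p.2.2.2.1.unpair.1.unpair.2).length) &&
            core2 (Denumerable.ofNat (List ℕ) p.2.2.2.1.unpair.1.unpair.2)
              p.2.2.2.2.unpair.2.unpair.2
              (Nat.Partrec.Code.evaln p.2.2.2.2.unpair.2.unpair.1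
                (Denumerable.ofNat Code p.2.1)
                (Nat.pair p.2.2.2.2.unpair.1 p.2.2.2.2.unpair.2.unpair.2)))) := by
    refine Primrec.ite (Primrec.eq.comp (up1 hb) (Primrec.const 0)) hbr0 ?_
    refine Primrec.ite (Primrec.eq.comp (up1 hb) (Primrec.const 1)) hbr1 ?_
    refine Primrec.ite (Primrec.nat_lt.comp hx2 (up2 hb)) (Primrec.const true) ?_
    exact Primrec.ite (Primrec.eq.comp (Primrec.option_isSome.comp hev3)
      (Primrec.const false)) (Primrec.const true) hbr2
  exact (hfull.of_eq fun p => by rw [RFun]).to_comp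

end D02FIN
namespace D02FIN
open Nat.Partrec (Code)
open Nat.Partrec.Code

theorem mem_one_iff {p : Part ℕ} {v : ℕ} (hv : v ∈ p) : 1 ∈ p ↔ v = 1 :=
  ⟨fun h => (Part.mem_unique h hv).symm, fun h => h ▸ hv⟩

theorem bitv_eq_iff {v1 v2 : ℕ} : bitv v1 = bitv v2 ↔ ((v1 = 1) ↔ (v2 = 1)) := by
  unfold bitv
  by_cases c1 : v1 = 1 <;> by_cases c2 : v2 = 1 <;> simp [c1, c2]

theorem main_pi4 : Pi4 Delta02FIN := by
  classical
  refine ⟨fun p => RFun p.1 p.2.1 p.2.2.1 p.2.2.2.1 p.2.2.2.2, RFun_computable, ?_⟩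
  ext e
  simp only [Delta02FIN, Set.mem_setOf_eq]
  constructor
  · intro he a
    by_cases htot : ∀ x, (phi a x).Dom
    · by_cases hstab : ∀ x, ∃ N, ∀ s t, N ≤ s → N ≤ t →
          (1 ∈ phi a (Nat.pair s x) ↔ 1 ∈ phi a (Nat.pair t x))
      · -- `a` is a good Δ⁰₂ code
        have hd : GoodD02 a := ⟨htot, hstab⟩
        obtain ⟨b0, hb0⟩ := (fin_iff hd e).1 (he (ASet a) (good_delta02 hd))
        refine ⟨Nat.pair 2 b0, fun c => ?_⟩
        by_cases hx : c.unpair.1.unpair.1 < b0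
        · refine ⟨0, ?_⟩
          simp only [RFun, Nat.unpair_pair]
          rw [if_neg (by omega), if_neg (by omega), if_pos hx]
        · by_cases hsome : (Nat.Partrec.Code.evaln c.unpair.2.unpair.1
              (transN c.unpair.1.unpair.2 e) c.unpair.1.unpair.1).isSome = true
          · have hnH := hb0 _ (le_of_not_gt hx)
            have hnst : ¬ ∀ t k' i v, c.unpair.2.unpair.2 ≤ t →
                i < (Denumerable.ofNat (List ℕ) c.unpair.1.unpair.2).length →
                Nat.Partrec.Code.evaln k' (Denumerable.ofNat Code a) (Nat.pair t i) = some v →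
                (Denumerable.ofNat (List ℕ) c.unpair.1.unpair.2).getD i 0 = bitv v := by
              intro hst
              exact hnH ⟨c.unpair.1.unpair.2, c.unpair.2.unpair.1, c.unpair.2.unpair.2,
                hsome, hst⟩
            push_neg at hnst
            obtain ⟨t, k', i, v, hts, hi, hev, hne⟩ := hnst
            refine ⟨Nat.pair t (Nat.pair k' i), ?_⟩
            simp only [RFun, Nat.unpair_pair]
            rw [if_neg (by omega), if_neg (by omega), if_neg hx, if_neg (by simp [hsome])]
            simp only [core2, hev, Option.map_some, Option.getD_some, Bool.and_eq_true,
              decide_eq_true_eq]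
            exact ⟨hts, hi, hne⟩
          · refine ⟨0, ?_⟩
            simp only [RFun, Nat.unpair_pair]
            rw [if_neg (by omega), if_neg (by omega), if_neg hx,
              if_pos (by simpa using hsome)]
      · push_neg at hstab
        obtain ⟨x, hx⟩ := hstab
        refine ⟨Nat.pair 1 x, fun c => ?_⟩
        obtain ⟨s, t, hs, ht, hne0⟩ := hx c
        have hne : ¬(1 ∈ phi a (Nat.pair s x) ↔ 1 ∈ phi a (Nat.pair t x)) := by
          rcases hne0 with ⟨h1, h2⟩ | ⟨h1, h2⟩ <;> tauto
        have hds := htot (Nat.pair s x)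
        have hdt := htot (Nat.pair t x)
        obtain ⟨k1, hk1⟩ := evaln_complete.1 (Part.get_mem hds)
        obtain ⟨k2, hk2⟩ := evaln_complete.1 (Part.get_mem hdt)
        refine ⟨Nat.pair (Nat.pair s t) (Nat.pair k1 k2), ?_⟩
        have hbv : bitv ((phi a (Nat.pair s x)).get hds) ≠
            bitv ((phi a (Nat.pair t x)).get hdt) := by
          intro hbb
          exact hne (((mem_one_iff (Part.get_mem hds)).trans (bitv_eq_iff.1 hbb)).trans
            (mem_one_iff (Part.get_mem hdt)).symm)
        simp only [RFun, Nat.unpair_pair]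
        rw [if_neg (by omega), if_pos trivial]
        rw [Option.mem_def] at hk1 hk2
        simp [core1, hk1, hk2, hs, ht, hbv]
    · push_neg at htot
      obtain ⟨x, hx⟩ := htot
      refine ⟨Nat.pair 0 x, fun c => ⟨0, ?_⟩⟩
      simp only [RFun, Nat.unpair_pair, if_pos rfl]
      rcases hE : Nat.Partrec.Code.evaln c (Denumerable.ofNat Code a) x with _ | y
      · simp
      · exact absurd (Part.dom_iff_mem.2 ⟨y, evaln_sound (Option.mem_def.2 hE)⟩) hx
  · intro hΦ A hA
    obtain ⟨d, hd, hAd⟩ := delta02_code hA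
    subst hAd
    obtain ⟨b, hb⟩ := hΦ d
    by_cases h0 : b.unpair.1 = 0
    · exfalso
      have hdom := hd.1 b.unpair.2
      obtain ⟨k, hk⟩ := evaln_complete.1 (Part.get_mem hdom)
      obtain ⟨dd, hR⟩ := hb k
      rw [Option.mem_def] at hk
      simp [RFun, h0, hk] at hR
    · by_cases h1 : b.unpair.1 = 1
      · exfalso
        obtain ⟨N, hN⟩ := hd.2 b.unpair.2
        obtain ⟨dd, hR⟩ := hb N
        simp only [RFun, if_neg h0, if_pos h1] at hR
        rcases hE1 : Nat.Partrec.Code.evaln dd.unpair.2.unpair.1 (Denumerable.ofNat Code d)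
            (Nat.pair dd.unpair.1.unpair.1 b.unpair.2) with _ | v1
        · simp [core1, hE1] at hR
        · rcases hE2 : Nat.Partrec.Code.evaln dd.unpair.2.unpair.2 (Denumerable.ofNat Code d)
              (Nat.pair dd.unpair.1.unpair.2 b.unpair.2) with _ | v2
          · simp [core1, hE1, hE2] at hR
          · simp only [core1, hE1, hE2, Option.bind_some, Option.map_some, Option.getD_some,
              Bool.and_eq_true, decide_eq_true_eq] at hR
            obtain ⟨ht1, ht2, hbv⟩ := hR
            have hm1 : v1 ∈ phi d (Nat.pair dd.unpair.1.unpair.1 b.unpair.2) :=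
              evaln_sound (Option.mem_def.2 hE1)
            have hm2 : v2 ∈ phi d (Nat.pair dd.unpair.1.unpair.2 b.unpair.2) :=
              evaln_sound (Option.mem_def.2 hE2)
            have hiff := hN _ _ ht1 ht2
            exact hbv (bitv_eq_iff.2 (((mem_one_iff hm1).symm.trans hiff).trans
              (mem_one_iff hm2)))
      · refine (fin_iff hd e).2 ⟨b.unpair.2, fun x hx hH => ?_⟩
        obtain ⟨m, k, s, hsome, hst⟩ := hH
        obtain ⟨dd, hR⟩ := hb (Nat.pair (Nat.pair x m) (Nat.pair k s))
        simp only [RFun, if_neg h0, if_neg h1, Nat.unpair_pair] at hR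
        rw [if_neg (not_lt.2 hx), if_neg (by simp [hsome])] at hR
        rcases hE : Nat.Partrec.Code.evaln dd.unpair.2.unpair.1 (Denumerable.ofNat Code d)
            (Nat.pair dd.unpair.1 dd.unpair.2.unpair.2) with _ | v
        · simp [core2, hE] at hR
        · simp only [core2, hE, Option.map_some, Option.getD_some, Bool.and_eq_true, decide_eq_true_eq] at hR
          obtain ⟨hts, hilen, hne⟩ := hR
          exact hne (hst dd.unpair.1 dd.unpair.2.unpair.1 dd.unpair.2.unpair.2 v hts hilen hE)

end D02FIN

/-- Δ⁰₂[FIN] is Π⁰₄. -/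
theorem delta02fin_pi4 : Pi4 Delta02FIN := D02FIN.main_pi4
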